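/- Let n = 2m+1 and let E be a subset of {1,...,2n} of cardinality n. Define E^⊥ = (2n+1-E)^c (complement taken in {1,...,2n}). Let σ_E be the permutation of {1,...,2n} sending {1,...,n} to the elements of E in increasing order and {n+1,...,2n} to the elements of E^c in increasing order, and let σ'_E be the permutation sending {1,...,n} to the elements of 2n+1-E in decreasing order and {n+1,...,2n} to the elements of E^⊥ in increasing order. Then sgn(σ'_E) = (-1)^{m+1} · sgn(σ_E). -/

import Mathlib

open Equiv Equiv.Perm

lemma rev_decompose (k : ℕ) : (Fin.revPerm : Perm (Fin (k+2))) =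
    Equiv.Perm.decomposeFin.symm (Fin.last (k+1), Fin.revPerm * finRotate (k+1)) := by
  apply Equiv.ext
  refine Fin.cases ?_ ?_
  · simp
  · intro x
    rw [Equiv.Perm.decomposeFin_symm_apply_succ]
    rcases eq_or_ne x (Fin.last k) with h | h
    · subst h
      simp [Fin.ext_iff, Fin.val_rev, Equiv.swap_apply_def]
    · have hx : (x : ℕ) < k := Fin.lt_last_iff_ne_last.2 h
      have h1 : ((finRotate (k+1)) x : ℕ) = x + 1 := coe_finRotate_of_ne_last h
      rw [Equiv.swap_apply_of_ne_of_ne]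
      · simp only [Equiv.Perm.mul_apply, Fin.revPerm_apply, Fin.ext_iff, Fin.val_rev,
          Fin.val_succ, h1]
        omega
      · simp only [Equiv.Perm.mul_apply, Fin.revPerm_apply, Ne, Fin.ext_iff, Fin.val_rev,
          Fin.val_succ, Fin.val_zero, h1]
        omega
      · simp only [Equiv.Perm.mul_apply, Fin.revPerm_apply, Ne, Fin.ext_iff, Fin.val_rev,
          Fin.val_succ, Fin.val_last, h1]
        omega

lemma sign_revPerm_fin (k : ℕ) :
    Perm.sign (Fin.revPerm : Perm (Fin k)) = (-1) ^ (k * (k-1) / 2) := by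
  induction k with
  | zero => simp [Subsingleton.elim (Fin.revPerm : Perm (Fin 0)) 1]
  | succ k ih =>
    cases k with
    | zero => simp [Subsingleton.elim (Fin.revPerm : Perm (Fin 1)) 1]
    | succ j =>
      rw [rev_decompose, Equiv.Perm.decomposeFin.symm_sign, if_neg (by simp [Fin.ext_iff]),
        map_mul, sign_finRotate, ih]
      simp only [Nat.add_sub_cancel]
      have key : (j+2)*(j+1)/2 = (j+1)*j/2 + (j+1) := by
        obtain ⟨a, ha⟩ := Nat.even_mul_succ_self j
        have h1 : (j+2)*(j+1) = j*(j+1) + 2*(j+1) := by ring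
        have h2 : (j+1)*j = j*(j+1) := by ring
        rw [h1, h2, ha]; omega
      rw [key, pow_add, pow_succ]
      simp [mul_comm, mul_left_comm]


/-- With n = 2m+1, E ⊆ {1,…,2n} of cardinality n (here 0-indexed as a
subset of `Fin (2*n)`, with j ↦ 2n+1-j rendered as `Fin.rev`), let σ be the permutation
sending the first half increasingly onto E and the second half increasingly onto Eᶜ,
and σ' the permutation sending the first half decreasingly onto 2n+1-E and the second
half increasingly onto E^⊥ = ((2n+1-E)ᶜ).  Then sgn σ' = (-1)^{m+1} · sgn σ. -/
theorem stmt_0 (m n : ℕ) (hn : n = 2*m+1)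
    (E : Finset (Fin (2*n))) (hE : E.card = n)
    (σ σ' : Equiv.Perm (Fin (2*n)))
    (hσmono : ∀ j k : Fin (2*n), (j:ℕ) < n → (k:ℕ) < n → j < k → σ j < σ k)
    (hσimg : ∀ j : Fin (2*n), σ j ∈ E ↔ (j:ℕ) < n)
    (hσmono2 : ∀ j k : Fin (2*n), n ≤ (j:ℕ) → n ≤ (k:ℕ) → j < k → σ j < σ k)
    (hσ'anti : ∀ j k : Fin (2*n), (j:ℕ) < n → (k:ℕ) < n → j < k → σ' k < σ' j)
    (hσ'img : ∀ j : Fin (2*n), σ' j ∈ E.image Fin.rev ↔ (j:ℕ) < n)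
    (hσ'mono2 : ∀ j k : Fin (2*n), n ≤ (j:ℕ) → n ≤ (k:ℕ) → j < k → σ' j < σ' k) :
    Equiv.Perm.sign σ' = (-1)^(m+1) * Equiv.Perm.sign σ := by
  have hnn : n + n = 2*n := by omega
  set e : (Fin n ⊕ Fin n) ≃ Fin (2*n) := finSumFinEquiv.trans (finCongr hnn) with he
  have he1 : ∀ i : Fin n, ((e (Sum.inl i)) : ℕ) = i := by intro i; simp [he]
  have he2 : ∀ i : Fin n, ((e (Sum.inr i)) : ℕ) = n + i := by
    intro i; simp [he, Nat.add_comm]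
  set τ : Perm (Fin (2*n)) :=
    e.permCongr (Equiv.sumCongr (1 : Perm (Fin n)) Fin.revPerm) with hτ
  have hτ1 : ∀ i : Fin n, τ (e (Sum.inl i)) = e (Sum.inl i) := by
    intro i; simp [hτ, Equiv.permCongr_apply]
  have hτ2 : ∀ i : Fin n, τ (e (Sum.inr i)) = e (Sum.inr i.rev) := by
    intro i; simp [hτ, Equiv.permCongr_apply]
  have hmemrev : ∀ x : Fin (2*n), x.rev ∈ E.image Fin.rev ↔ x ∈ E := by
    intro x
    constructor
    · intro hx
      obtain ⟨a, ha, hax⟩ := Finset.mem_image.1 hx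
      rwa [Fin.rev_injective hax] at ha
    · intro hx; exact Finset.mem_image_of_mem _ hx
  -- first halves
  have hfst : (fun i : Fin n => (σ' (e (Sum.inl i))).rev) = fun i => σ (e (Sum.inl i)) := by
    have h1 : (fun i : Fin n => (σ' (e (Sum.inl i))).rev) = E.orderEmbOfFin hE := by
      apply Finset.orderEmbOfFin_unique
      · intro i
        rw [← hmemrev, Fin.rev_rev]
        exact (hσ'img _).2 (by rw [he1]; exact i.2)
      · intro i j hij
        rw [Fin.rev_lt_rev]
        exact hσ'anti _ _ (by rw [he1]; exact i.2) (by rw [he1]; exact j.2)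
          (by rw [Fin.lt_def, he1, he1]; exact hij)
    have h2 : (fun i : Fin n => σ (e (Sum.inl i))) = E.orderEmbOfFin hE := by
      apply Finset.orderEmbOfFin_unique
      · intro i
        exact (hσimg _).2 (by rw [he1]; exact i.2)
      · intro i j hij
        exact hσmono _ _ (by rw [he1]; exact i.2) (by rw [he1]; exact j.2)
          (by rw [Fin.lt_def, he1, he1]; exact hij)
    rw [h1, h2]
  -- second halves
  have hcard : ((E.image Fin.rev)ᶜ).card = n := by
    rw [Finset.card_compl, Finset.card_image_of_injective _ Fin.rev_injective, hE]
    simp; omega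
  have hsnd : (fun i : Fin n => σ' (e (Sum.inr i)))
      = fun i => (σ (e (Sum.inr i.rev))).rev := by
    have h1 : (fun i : Fin n => σ' (e (Sum.inr i))) = _root_.Finset.orderEmbOfFin _ hcard := by
      apply Finset.orderEmbOfFin_unique
      · intro i
        rw [Finset.mem_compl]
        intro hmem
        have := (hσ'img _).1 hmem
        rw [he2] at this; omega
      · intro i j hij
        exact hσ'mono2 _ _ (by rw [he2]; omega) (by rw [he2]; omega)
          (by rw [Fin.lt_def, he2, he2]; omega)
    have h2 : (fun i : Fin n => (σ (e (Sum.inr i.rev))).rev)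
        = _root_.Finset.orderEmbOfFin _ hcard := by
      apply Finset.orderEmbOfFin_unique
      · intro i
        rw [Finset.mem_compl, hmemrev]
        intro hmem
        have := (hσimg _).1 hmem
        rw [he2] at this; omega
      · intro i j hij
        rw [Fin.rev_lt_rev]
        have hij' : (j.rev : ℕ) < (i.rev : ℕ) := by
          rw [Fin.val_rev, Fin.val_rev]
          have := j.2
          have hij2 : (i:ℕ) < (j:ℕ) := hij
          omega
        exact hσmono2 _ _ (by rw [he2]; omega) (by rw [he2]; omega)
          (by rw [Fin.lt_def, he2, he2]; omega)
    rw [h1, h2]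
  -- the factorization
  have hfact : σ' = Fin.revPerm * σ * τ := by
    apply Equiv.ext
    intro j
    obtain ⟨s, rfl⟩ := e.surjective j
    simp only [Equiv.Perm.mul_apply, Fin.revPerm_apply]
    cases s with
    | inl i =>
      rw [hτ1]
      have := congrFun hfst i
      try simp only at this
      rw [← this, Fin.rev_rev]
    | inr i =>
      rw [hτ2]
      have := congrFun hsnd i
      try simp only at this
      rw [this]
  -- sign computation
  rw [hfact, map_mul, map_mul]
  have hsτ : Equiv.Perm.sign τ = (-1 : ℤˣ)^(n*(n-1)/2) := by
    rw [hτ, Equiv.Perm.sign_permCongr, Equiv.Perm.sign_sumCongr, sign_revPerm_fin]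
    simp
  have hodd : Odd (n*(2*n-1)) := by
    subst hn
    exact Odd.mul (Nat.odd_iff.2 (by omega)) (Nat.odd_iff.2 (by omega))
  have hsrev : Equiv.Perm.sign (Fin.revPerm : Perm (Fin (2*n))) = -1 := by
    rw [sign_revPerm_fin]
    have h2 : 2*n*(2*n-1) = 2*(n*(2*n-1)) := mul_assoc 2 n _
    have h1 : 2*n*(2*n-1)/2 = n*(2*n-1) := by omega
    rw [h1]
    exact Odd.neg_one_pow hodd
  rw [hsτ, hsrev]
  have hB : n*(n-1)/2 = m*(2*m+1) := by
    subst hn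
    simp only [Nat.add_sub_cancel]
    have h2 : (2*m+1)*(2*m) = 2*(m*(2*m+1)) := by ring
    omega
  rw [hB]
  have hpm : (-1 : ℤˣ)^(m*(2*m+1)) = (-1)^m := by
    rw [mul_comm, pow_mul, pow_succ, pow_mul, Int.units_sq, one_pow, one_mul]
  rw [hpm, pow_succ]
  simp [mul_comm, mul_left_comm, mul_assoc]
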